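/- arXiv:1711.03466 — 2 statements merged into one kernel-verified Lean document; each statement's English description precedes it below -/
import Mathlib

section
/- For α = 1, a strategy profile s in a network creation game is a pure Nash equilibrium if and only if s is rational and the graph G(s) has diameter at most 2. -/
open SimpleGraph ENNReal Finset

/-- A strategy profile: each player chooses a set of other players. -/
abbrev Profile (n : ℕ) := Fin n → Finset (Fin n)

/-- Validity: no player buys an edge to herself. -/
def Valid {n : ℕ} (s : Profile n) : Prop := ∀ i, i ∉ s i

/-- The graph formed by a strategy profile: `{i,j}` is an edge iff `j ∈ s i` or `i ∈ s j`. -/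
def NCGraph {n : ℕ} (s : Profile n) : SimpleGraph (Fin n) :=
  SimpleGraph.fromRel (fun i j => j ∈ s i)

instance {n : ℕ} (s : Profile n) : DecidableRel (NCGraph s).Adj := fun i j =>
  decidable_of_iff (i ≠ j ∧ (j ∈ s i ∨ i ∈ s j))
    (SimpleGraph.fromRel_adj (fun a b => b ∈ s a) i j).symm

/-- Distance cost of player `i`: sum of (extended) distances to all players. -/
noncomputable def dCost {n : ℕ} (s : Profile n) (i : Fin n) : ℝ≥0∞ :=
  ∑ j, ((NCGraph s).edist i j : ℝ≥0∞)

/-- Total cost of player `i` in the network creation game with parameter `α`. -/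
noncomputable def cost {n : ℕ} (α : ℝ) (s : Profile n) (i : Fin n) : ℝ≥0∞ :=
  ENNReal.ofReal α * (s i).card + dCost s i

/-- Social cost: sum of all players' costs. -/
noncomputable def socialCost {n : ℕ} (α : ℝ) (s : Profile n) : ℝ≥0∞ :=
  ∑ i, cost α s i

/-- A profile is rational if no edge is bought by both of its endpoints. -/
def Rational {n : ℕ} (s : Profile n) : Prop := ∀ i j, j ∈ s i → i ∉ s j

/-- Pure Nash equilibrium. -/
def IsNashEq {n : ℕ} (α : ℝ) (s : Profile n) : Prop :=
  ∀ (i : Fin n) (t : Finset (Fin n)), i ∉ t →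
    cost α s i ≤ cost α (Function.update s i t) i

/-- Strong equilibrium: no nonempty coalition has a joint deviation strictly
decreasing every member's cost. -/
def IsStrongEq {n : ℕ} (α : ℝ) (s : Profile n) : Prop :=
  ∀ (K : Finset (Fin n)) (s' : Profile n), K.Nonempty → Valid s' →
    (∀ i ∉ K, s' i = s i) → ∃ i ∈ K, cost α s i ≤ cost α s' i

/-- A star graph: one center adjacent to all other vertices, and no other edges. -/
def IsStar {V : Type*} (G : SimpleGraph V) : Prop :=
  ∃ c : V, ∀ i j : V, G.Adj i j ↔ i ≠ j ∧ (i = c ∨ j = c)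

lemma ncg_adj {n : ℕ} (s : Profile n) (i j : Fin n) :
    (NCGraph s).Adj i j ↔ i ≠ j ∧ (j ∈ s i ∨ i ∈ s j) :=
  SimpleGraph.fromRel_adj _ i j

lemma two_le_enat (d : ℕ∞) (h0 : d ≠ 0) (h1 : d ≠ 1) : 2 ≤ d := by
  cases d with
  | top => exact le_top
  | coe m => norm_cast at h0 h1 ⊢; omega

lemma edist_two_le {V : Type*} (G : SimpleGraph V) {u v : V} (hne : u ≠ v)
    (hadj : ¬ G.Adj u v) : 2 ≤ G.edist u v :=
  two_le_enat _ (by simpa [SimpleGraph.edist_eq_zero_iff] using hne)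
    (by simpa [SimpleGraph.edist_eq_one_iff_adj] using hadj)

lemma cost_one {n : ℕ} (s : Profile n) (i : Fin n) :
    cost 1 s i = ((s i).card : ℝ≥0∞) + dCost s i := by
  simp [cost, ENNReal.ofReal_one, one_mul]

-- pointwise inequality for the backward direction
lemma pointwise {n : ℕ} (s : Profile n) (hv : Valid s) (hr : Rational s)
    (hd : ∀ i j : Fin n, (NCGraph s).edist i j ≤ 2)
    (i : Fin n) (t : Finset (Fin n)) (hit : i ∉ t) (k : Fin n) :
    ((NCGraph s).edist i k : ℝ≥0∞) + (if k ∈ s i then 1 else 0) ≤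
      ((NCGraph (Function.update s i t)).edist i k : ℝ≥0∞) + (if k ∈ t then 1 else 0) := by
  set G := NCGraph s with hG
  set H := NCGraph (Function.update s i t) with hH
  by_cases hk : k = i
  · subst hk
    simp [SimpleGraph.edist_self, hv k, hit]
  have hik : i ≠ k := fun h => hk h.symm
  have hdG2 : (G.edist i k : ℝ≥0∞) ≤ 2 := by exact_mod_cast hd i k
  have hdH1 : (1 : ℝ≥0∞) ≤ (H.edist i k : ℝ≥0∞) := by
    exact_mod_cast Order.one_le_iff_pos.mpr (H.edist_pos_of_ne hik)
  have hHadj : H.Adj i k ↔ (k ∈ t ∨ i ∈ s k) := by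
    rw [hH, ncg_adj]
    simp [Function.update_self, Function.update_of_ne hk, hik]
  have hGadj : G.Adj i k ↔ (k ∈ s i ∨ i ∈ s k) := by
    rw [hG, ncg_adj]; simp [hik]
  by_cases h1 : k ∈ s i
  · have hdG : (G.edist i k : ℝ≥0∞) = 1 := by
      exact_mod_cast (SimpleGraph.edist_eq_one_iff_adj (G := G)).mpr (hGadj.mpr (Or.inl h1))
    have hks : i ∉ s k := hr i k h1
    by_cases h2 : k ∈ t
    · simp only [h1, h2, if_pos]
      rw [hdG]
      exact add_le_add_left hdH1 1
    · have hdH2 : (2 : ℝ≥0∞) ≤ (H.edist i k : ℝ≥0∞) := by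
        exact_mod_cast edist_two_le H hik (fun h => by
          rcases hHadj.mp h with h | h
          exacts [h2 h, hks h])
      simp only [h1, if_pos, h2, if_neg, not_false_iff, add_zero]
      calc (G.edist i k : ℝ≥0∞) + 1 = 2 := by rw [hdG]; norm_num
        _ ≤ _ := hdH2
  · by_cases h2 : k ∈ t
    · simp only [h1, if_neg, not_false_iff, add_zero, h2, if_pos]
      calc (G.edist i k : ℝ≥0∞) ≤ 2 := hdG2
        _ = 1 + 1 := by norm_num
        _ ≤ _ := add_le_add_left hdH1 1
    · simp only [h1, h2, if_neg, not_false_iff, add_zero]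
      by_cases h3 : i ∈ s k
      · have hdG : (G.edist i k : ℝ≥0∞) = 1 := by
          exact_mod_cast (SimpleGraph.edist_eq_one_iff_adj (G := G)).mpr (hGadj.mpr (Or.inr h3))
        have hdH : (H.edist i k : ℝ≥0∞) = 1 := by
          exact_mod_cast (SimpleGraph.edist_eq_one_iff_adj (G := H)).mpr (hHadj.mpr (Or.inr h3))
        rw [hdG, hdH]
      · have hdH2 : (2 : ℝ≥0∞) ≤ (H.edist i k : ℝ≥0∞) := by
          exact_mod_cast edist_two_le H hik (fun h => by
            rcases hHadj.mp h with h | h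
            exacts [h2 h, h3 h])
        exact hdG2.trans hdH2

/-- Finiteness of cost at a Nash equilibrium. -/
lemma cost_ne_top {n : ℕ} (s : Profile n) (hne : IsNashEq 1 s) (i : Fin n) :
    cost 1 s i ≠ ⊤ := by
  set t : Finset (Fin n) := Finset.univ.erase i with ht
  have hit : i ∉ t := Finset.notMem_erase i _
  have h := hne i t hit
  intro htop
  rw [htop, top_le_iff] at h
  have : cost 1 (Function.update s i t) i ≠ ⊤ := by
    rw [cost_one]
    refine ENNReal.add_ne_top.mpr ⟨ENNReal.natCast_ne_top _, ?_⟩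
    rw [dCost]
    intro hs
    obtain ⟨j, -, hj⟩ := ENNReal.sum_eq_top.mp hs
    have : (NCGraph (Function.update s i t)).edist i j ≠ ⊤ := by
      by_cases hij : j = i
      · subst hij; simp [SimpleGraph.edist_self]
      · have hadj : (NCGraph (Function.update s i t)).Adj i j := by
          rw [ncg_adj]
          exact ⟨fun h => hij h.symm, Or.inl (by
            rw [Function.update_self]
            exact Finset.mem_erase.mpr ⟨hij, Finset.mem_univ j⟩)⟩
        rw [SimpleGraph.edist_eq_one_iff_adj.mpr hadj]
        exact ENat.one_ne_top
    exact this (by apply ENat.toENNReal_strictMono.injective; rw [hj, ENat.toENNReal_top])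
  exact this h

/-- Nash implies rational. -/
lemma nash_rational {n : ℕ} (s : Profile n) (hv : Valid s) (hne : IsNashEq 1 s) :
    Rational s := by
  intro i j hji hij
  set t : Finset (Fin n) := (s i).erase j with ht
  have hit : i ∉ t := fun h => hv i (Finset.mem_of_mem_erase h)
  have hgr : NCGraph (Function.update s i t) = NCGraph s := by
    ext u v
    rw [ncg_adj, ncg_adj]
    refine and_congr_right fun huv => ?_
    rcases eq_or_ne u i with rfl | hui
    · rw [Function.update_self, Function.update_of_ne (fun h => huv h.symm)]
      rcases eq_or_ne v j with rfl | hvj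
      · simp [ht, Finset.mem_erase, hij, hji]
      · simp [ht, Finset.mem_erase, hvj]
    · rw [Function.update_of_ne hui]
      rcases eq_or_ne v i with rfl | hvi
      · rw [Function.update_self]
        rcases eq_or_ne u j with rfl | huj
        · simp [ht, Finset.mem_erase, hij, hji]
        · simp [ht, Finset.mem_erase, huj]
      · rw [Function.update_of_ne hvi]
  have hd : dCost (Function.update s i t) i = dCost s i := by
    simp [dCost, hgr]
  have h := hne i t hit
  rw [cost_one, cost_one, hd, Function.update_self] at h
  have hDne : dCost s i ≠ ⊤ := by
    have := cost_ne_top s hne i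
    rw [cost_one] at this
    exact fun hD => this (by rw [hD, add_top])
  have hcard : (t.card : ℝ≥0∞) < (s i).card := by
    have : t.card < (s i).card := Finset.card_erase_lt_of_mem hji
    exact_mod_cast this
  exact absurd h (not_le.mpr (ENNReal.add_lt_add_right hDne hcard))

/-- Nash implies diameter at most 2. -/
lemma nash_diam {n : ℕ} (s : Profile n) (hv : Valid s) (hne : IsNashEq 1 s) :
    ∀ i j : Fin n, (NCGraph s).edist i j ≤ 2 := by
  intro i j
  by_contra hd
  push_neg at hd
  have hij : i ≠ j := by
    intro h; subst h; simp [SimpleGraph.edist_self] at hd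
  have hnadj : ¬ (NCGraph s).Adj i j := by
    intro h
    rw [SimpleGraph.edist_eq_one_iff_adj.mpr h] at hd
    exact absurd hd (by norm_num)
  set t : Finset (Fin n) := insert j (s i) with ht
  have hit : i ∉ t := by
    simp only [ht, Finset.mem_insert]
    exact fun h => h.elim (fun h => hij h) (hv i)
  set H := NCGraph (Function.update s i t) with hH
  have hle : NCGraph s ≤ H := by
    intro u v huv
    rw [ncg_adj] at huv ⊢
    refine ⟨huv.1, ?_⟩
    rcases huv.2 with h | h
    · left
      rcases eq_or_ne u i with rfl | hui
      · rw [Function.update_self]; exact Finset.mem_insert_of_mem h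
      · rwa [Function.update_of_ne hui]
    · right
      rcases eq_or_ne v i with rfl | hvi
      · rw [Function.update_self]; exact Finset.mem_insert_of_mem h
      · rwa [Function.update_of_ne hvi]
  have hHadj : H.Adj i j := by
    rw [hH, ncg_adj]
    exact ⟨hij, Or.inl (by rw [Function.update_self]; exact Finset.mem_insert_self j _)⟩
  -- split the sums at j
  set A : ℝ≥0∞ := ∑ k ∈ Finset.univ.erase j, ((NCGraph s).edist i k : ℝ≥0∞) with hA
  have hsplitG : dCost s i = A + ((NCGraph s).edist i j : ℝ≥0∞) := by
    rw [dCost, hA, Finset.sum_erase_add]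
    exact Finset.mem_univ j
  have hsplitH : dCost (Function.update s i t) i ≤ A + 1 := by
    rw [dCost, ← Finset.sum_erase_add _ _ (Finset.mem_univ j)]
    refine add_le_add (Finset.sum_le_sum fun k _ => ?_) ?_
    · exact_mod_cast SimpleGraph.edist_anti hle
    · exact_mod_cast le_of_eq (SimpleGraph.edist_eq_one_iff_adj.mpr hHadj)
  have hcardt : (t.card : ℝ≥0∞) ≤ (s i).card + 1 := by
    have : t.card ≤ (s i).card + 1 := Finset.card_insert_le j (s i)
    exact_mod_cast this
  have hfin : ((s i).card : ℝ≥0∞) + A ≠ ⊤ := by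
    have hc := cost_ne_top s hne i
    rw [cost_one, hsplitG] at hc
    intro h
    exact hc (by rw [← add_assoc, h, top_add])
  have h := hne i t hit
  rw [cost_one, cost_one, hsplitG, Function.update_self] at h
  have hup : cost 1 s i ≥ 0 := zero_le
  have hlt : ((t.card : ℝ≥0∞)) + dCost (Function.update s i t) i
      < ((s i).card : ℝ≥0∞) + (A + ((NCGraph s).edist i j : ℝ≥0∞)) := by
    calc ((t.card : ℝ≥0∞)) + dCost (Function.update s i t) i
        ≤ (((s i).card : ℝ≥0∞) + 1) + (A + 1) := add_le_add hcardt hsplitH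
      _ = (((s i).card : ℝ≥0∞) + A) + 2 := by ring
      _ < (((s i).card : ℝ≥0∞) + A) + ((NCGraph s).edist i j : ℝ≥0∞) := by
          refine ENNReal.add_lt_add_left hfin ?_
          exact_mod_cast hd
      _ = ((s i).card : ℝ≥0∞) + (A + ((NCGraph s).edist i j : ℝ≥0∞)) := by ring
  exact absurd h (not_le.mpr hlt)

/-- For `α = 1`, a profile is a Nash equilibrium iff it is rational and the
graph has diameter at most `2`. -/

theorem stmt6 {n : ℕ} (hn : 3 ≤ n) (s : Profile n) (hv : Valid s) :
    IsNashEq 1 s ↔ Rational s ∧ ∀ i j : Fin n, (NCGraph s).edist i j ≤ 2 := by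
  constructor
  · intro hne
    exact ⟨nash_rational s hv hne, nash_diam s hv hne⟩
  · rintro ⟨hr, hd⟩ i t hit
    rw [cost_one, cost_one, Function.update_self]
    have hcard : ∀ A : Finset (Fin n),
        (A.card : ℝ≥0∞) = ∑ k : Fin n, (if k ∈ A then 1 else 0) := fun A => by
      rw [Finset.sum_ite_mem, Finset.univ_inter, Finset.sum_const, nsmul_eq_mul, mul_one]
    rw [hcard (s i), hcard t, dCost, dCost, ← Finset.sum_add_distrib, ← Finset.sum_add_distrib]
    refine Finset.sum_le_sum fun k _ => ?_
    have h := pointwise s hv hr hd i t hit k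
    calc (if k ∈ s i then (1:ℝ≥0∞) else 0) + ((NCGraph s).edist i k : ℝ≥0∞)
        = ((NCGraph s).edist i k : ℝ≥0∞) + (if k ∈ s i then 1 else 0) := add_comm _ _
      _ ≤ ((NCGraph (Function.update s i t)).edist i k : ℝ≥0∞) + (if k ∈ t then 1 else 0) := h
      _ = (if k ∈ t then (1:ℝ≥0∞) else 0) + _ := add_comm _ _
end

section
/- For α ≥ 2, every rational strategy profile s such that G(s) is a star (one center vertex adjacent to all other n−1 vertices, no other edges) is a strong equilibrium of the network creation game. -/
open SimpleGraph ENNReal Finset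

/-! ### Auxiliary lemmas -/

lemma NCG_adj {n : ℕ} {s : Profile n} {i j : Fin n} :
    (NCGraph s).Adj i j ↔ i ≠ j ∧ (j ∈ s i ∨ i ∈ s j) :=
  SimpleGraph.fromRel_adj _ i j

lemma two_le_edist {V : Type*} {G : SimpleGraph V} {i j : V} (hne : i ≠ j) (hna : ¬ G.Adj i j) :
    2 ≤ G.edist i j := by
  have h0 : G.edist i j ≠ 0 := by simp [edist_eq_zero_iff, hne]
  have h1 : G.edist i j ≠ 1 := by simp [edist_eq_one_iff_adj, hna]
  generalize G.edist i j = x at *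
  cases x with
  | top => exact le_top
  | coe m =>
    have hm : 2 ≤ m := by
      rcases m with _|_|m
      · simp at h0
      · simp at h1
      · omega
    exact_mod_cast hm

lemma enat_cast_ne_top {x : ℕ∞} (h : x ≠ ⊤) : (x : ℝ≥0∞) ≠ ⊤ := by
  have := ENat.toENNReal_lt.mpr h.lt_top
  rw [ENat.toENNReal_top] at this
  exact this.ne

/-- indegree of i under profile t -/
def inDeg {n : ℕ} (t : Profile n) (i : Fin n) : ℕ := #(univ.filter fun j => i ∈ t j)

lemma degree_le {n : ℕ} (t : Profile n) (i : Fin n) :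
    (NCGraph t).degree i ≤ (t i).card + inDeg t i := by
  classical
  rw [← card_neighborFinset_eq_degree]
  refine le_trans (card_le_card ?_) (card_union_le _ _)
  intro j hj
  rw [mem_neighborFinset] at hj
  rcases NCG_adj.mp hj with ⟨hne, h | h⟩
  · exact mem_union_left _ h
  · exact mem_union_right _ (by simp [inDeg, h])

lemma sum_inDeg {n : ℕ} (t : Profile n) (K : Finset (Fin n)) :
    ∑ i ∈ K, inDeg t i = ∑ j, #(K.filter fun i => i ∈ t j) := by
  classical
  simp only [inDeg, card_filter]
  rw [Finset.sum_comm]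

lemma sum_inDeg_univ {n : ℕ} (t : Profile n) :
    ∑ i, inDeg t i = ∑ j, (t j).card := by
  classical
  rw [sum_inDeg]
  simp

lemma dcost_deg {n : ℕ} (t : Profile n) (i : Fin n) :
    ((2 * n : ℕ) : ℝ≥0∞) ≤ dCost t i + ((NCGraph t).degree i : ℕ) + 2 := by
  classical
  set G := NCGraph t with hG
  have key : ∀ j : Fin n, (2 : ℝ≥0∞) ≤ (G.edist i j : ℝ≥0∞)
      + ((if j = i then 2 else 0) + (if G.Adj i j then 1 else 0)) := by
    intro j
    by_cases hji : j = i
    · simp [hji]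
    · by_cases hadj : G.Adj i j
      · have h1 : (1 : ℕ∞) ≤ G.edist i j :=
          Order.one_le_iff_pos.mpr (SimpleGraph.edist_pos_of_ne (Ne.symm hji))
        have h1' : (1 : ℝ≥0∞) ≤ (G.edist i j : ℝ≥0∞) := by
          exact_mod_cast (ENat.toENNReal_le.mpr h1)
        simp only [hji, hadj, if_false, if_true]
        calc (2:ℝ≥0∞) = 1 + (0 + 1) := by norm_num
        _ ≤ _ := add_le_add h1' le_rfl
      · have h2 : (2 : ℕ∞) ≤ G.edist i j := two_le_edist (fun h => hji h.symm) hadj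
        have h2' : (2 : ℝ≥0∞) ≤ (G.edist i j : ℝ≥0∞) := by
          exact_mod_cast (ENat.toENNReal_le.mpr h2)
        simp only [hji, hadj, if_false]
        simpa using h2'
  have hsum := Finset.sum_le_sum (fun j (_ : j ∈ (univ : Finset (Fin n))) => key j)
  rw [Finset.sum_add_distrib, Finset.sum_add_distrib, Finset.sum_ite_eq' univ i] at hsum
  have hdeg : (∑ j : Fin n, if G.Adj i j then (1:ℝ≥0∞) else 0) = ((G.degree i : ℕ) : ℝ≥0∞) := by
    rw [Finset.sum_boole]
    norm_cast
    rw [← card_neighborFinset_eq_degree]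
    congr 1
    ext j
    simp [mem_neighborFinset]
  rw [hdeg] at hsum
  simp only [Finset.sum_const, card_univ, Fintype.card_fin, nsmul_eq_mul, mem_univ, if_true] at hsum
  calc ((2*n : ℕ) : ℝ≥0∞) = (n : ℝ≥0∞) * 2 := by push_cast; ring
  _ ≤ _ := le_trans hsum (le_of_eq (by simp only [dCost, ← hG]; ring))

lemma exists_parent {V : Type*} {G : SimpleGraph V} {r v : V} (hvr : v ≠ r)
    (h : G.Reachable r v) : ∃ u, G.Adj v u ∧ G.dist r u < G.dist r v := by
  obtain ⟨p, hp⟩ := h.exists_walk_length_eq_dist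
  have hw : p.reverse.length = G.dist r v := by rw [SimpleGraph.Walk.length_reverse, hp]
  set w := p.reverse with hwdef
  clear_value w
  cases w with
  | nil => exact absurd rfl hvr
  | @cons _ u _ hadj q =>
    refine ⟨u, hadj, ?_⟩
    have : G.dist r u ≤ q.reverse.length := SimpleGraph.dist_le _
    rw [SimpleGraph.Walk.length_reverse] at this
    simp only [SimpleGraph.Walk.length_cons] at hw
    omega

lemma card_le_edges {V : Type*} [Fintype V] [DecidableEq V] {G : SimpleGraph V}
    [DecidableRel G.Adj] (hpre : G.Preconnected) (r : V) :
    Fintype.card V ≤ #G.edgeFinset + 1 := by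
  classical
  have hch : ∀ v : V, v ≠ r → ∃ u, G.Adj v u ∧ G.dist r u < G.dist r v := by
    intro v hv; exact exists_parent hv (hpre r v)
  choose! p hp1 hp2 using hch
  have hinj : Set.InjOn (fun v => s(v, p v)) (univ.erase r : Finset V) := by
    intro v hv w hw heq
    simp only [coe_erase, Set.mem_diff, Set.mem_singleton_iff, mem_coe, mem_erase] at hv hw
    by_contra hne
    rcases Sym2.eq_iff.mp heq with ⟨h1, h2⟩ | ⟨h1, h2⟩
    · exact hne h1
    · have d1 := hp2 v hv.2
      have d2 := hp2 w hw.2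
      rw [h2] at d1; rw [← h1] at d2
      omega
  have hmaps : ∀ v ∈ (univ.erase r : Finset V), s(v, p v) ∈ G.edgeFinset := by
    intro v hv
    rw [mem_edgeFinset]
    exact (hp1 v (mem_erase.mp hv).1 : G.Adj v (p v))
  have := Finset.card_le_card_of_injOn _ hmaps hinj
  rw [Finset.card_erase_of_mem (mem_univ r), card_univ] at this
  have hpos : 0 < Fintype.card V := Fintype.card_pos_iff.mpr ⟨r⟩
  omega

lemma exists_boundary {V : Type*} {G : SimpleGraph V} {K : Finset V} :
    ∀ {u v : V}, G.Walk u v → u ∈ K → v ∉ K → ∃ a b, G.Adj a b ∧ a ∈ K ∧ b ∉ K := by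
  intro u v w
  induction w with
  | nil => intro hu hv; exact absurd hu hv
  | @cons a b c hadj q ih =>
    intro hu hv
    by_cases hb : b ∈ K
    · exact ih hb hv
    · exact ⟨a, b, hadj, hu, hb⟩

lemma deg_pos_of_reachable {V : Type*} [Fintype V] {G : SimpleGraph V} [DecidableRel G.Adj]
    {u v : V} (hne : u ≠ v) (h : G.Reachable u v) : 0 < G.degree u := by
  obtain ⟨w⟩ := h
  cases w with
  | nil => exact absurd rfl hne
  | @cons _ x _ hadj q => exact (G.degree_pos_iff_exists_adj u).mpr ⟨x, hadj⟩

section Star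
variable {n : ℕ} {s : Profile n} {c : Fin n}
  (hc : ∀ i j : Fin n, (NCGraph s).Adj i j ↔ i ≠ j ∧ (i = c ∨ j = c))

include hc

lemma leaf_sub (hv : Valid s) {i : Fin n} (hi : i ≠ c) : s i ⊆ {c} := by
  intro j hj
  have hji : i ≠ j := fun h => hv i (h ▸ hj)
  have : (NCGraph s).Adj i j := NCG_adj.mpr ⟨hji, Or.inl hj⟩
  rcases ((hc i j).mp this).2 with h | h
  · exact absurd h hi
  · simp [h]

lemma leaf_card (hv : Valid s) {i : Fin n} (hi : i ≠ c) :
    (s i).card = if c ∈ s i then 1 else 0 := by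
  have hsub := leaf_sub hc hv hi
  by_cases h : c ∈ s i
  · simp only [h, if_true]
    exact le_antisymm (by simpa using card_le_card hsub) (card_pos.mpr ⟨c, h⟩)
  · simp only [h, if_false, card_eq_zero]
    rw [eq_empty_iff_forall_notMem]
    intro j hj
    exact h (mem_singleton.mp (hsub hj) ▸ hj)

lemma mem_center (hr : Rational s) {i : Fin n} (hi : i ≠ c) : i ∈ s c ↔ c ∉ s i := by
  constructor
  · intro h; exact hr c i h
  · intro h
    have hadj : (NCGraph s).Adj i c := (hc i c).mpr ⟨hi, Or.inr rfl⟩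
    rcases (NCG_adj.mp hadj).2 with h' | h'
    · exact absurd h' h
    · exact h'

lemma sum_buy (hv : Valid s) (hr : Rational s) : ∑ i, (s i).card = n - 1 := by
  classical
  rw [← Finset.sum_erase_add univ _ (mem_univ c)]
  have h1 : ∑ i ∈ univ.erase c, (s i).card
      = #((univ.erase c).filter fun i => c ∈ s i) := by
    rw [card_filter]
    refine Finset.sum_congr rfl fun i hi => ?_
    rw [leaf_card hc hv (mem_erase.mp hi).1]
  have h2 : (s c).card = #((univ.erase c).filter fun i => ¬ c ∈ s i) := by
    congr 1
    ext i
    simp only [mem_filter, mem_erase, mem_univ, and_true, true_and]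
    constructor
    · intro h
      have hic : i ≠ c := fun he => hv c (he ▸ h)
      exact ⟨hic, (mem_center hc hr hic).mp h⟩
    · rintro ⟨h1', h2'⟩
      exact (mem_center hc hr h1').mpr h2'
  rw [h1, h2, Finset.card_filter_add_card_filter_not, card_erase_of_mem (mem_univ c),
    card_univ, Fintype.card_fin]

lemma star_edist_center {j : Fin n} (hj : j ≠ c) : (NCGraph s).edist c j = 1 :=
  edist_eq_one_iff_adj.mpr ((hc c j).mpr ⟨Ne.symm hj, Or.inl rfl⟩)

lemma star_edist_leaf {i j : Fin n} (hi : i ≠ c) (hj : j ≠ c) (hij : i ≠ j) :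
    (NCGraph s).edist i j = 2 := by
  have hna : ¬ (NCGraph s).Adj i j := by
    rw [hc]; push_neg; intro _; exact ⟨hi, hj⟩
  refine le_antisymm ?_ (two_le_edist hij hna)
  have h := SimpleGraph.Walk.edist_le
    (SimpleGraph.Walk.cons ((hc i c).mpr ⟨hi, Or.inr rfl⟩)
      (SimpleGraph.Walk.cons ((hc c j).mpr ⟨Ne.symm hj, Or.inl rfl⟩) SimpleGraph.Walk.nil))
  simp only [SimpleGraph.Walk.length_cons, SimpleGraph.Walk.length_nil] at h
  exact_mod_cast h

lemma star_dcost_center : dCost s c = ((n - 1 : ℕ) : ℝ≥0∞) := by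
  classical
  unfold dCost
  rw [← Finset.sum_erase_add univ _ (mem_univ c)]
  rw [SimpleGraph.edist_self]
  have : ∑ j ∈ univ.erase c, ((NCGraph s).edist c j : ℝ≥0∞) = ∑ j ∈ univ.erase c, 1 := by
    refine Finset.sum_congr rfl fun j hj => ?_
    rw [star_edist_center hc (mem_erase.mp hj).1]
    exact_mod_cast rfl
  rw [this]
  simp [card_erase_of_mem, card_univ]

lemma star_dcost_leaf (hn : 3 ≤ n) {i : Fin n} (hi : i ≠ c) :
    dCost s i = ((2 * n - 3 : ℕ) : ℝ≥0∞) := by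
  classical
  unfold dCost
  rw [← Finset.sum_erase_add univ _ (mem_univ i), SimpleGraph.edist_self]
  have hcmem : c ∈ univ.erase i := mem_erase.mpr ⟨Ne.symm hi, mem_univ c⟩
  rw [← Finset.sum_erase_add _ _ hcmem]
  have h1 : ((NCGraph s).edist i c : ℝ≥0∞) = 1 := by
    rw [SimpleGraph.edist_comm, star_edist_center hc hi]; exact_mod_cast rfl
  have h2 : ∑ j ∈ (univ.erase i).erase c, ((NCGraph s).edist i j : ℝ≥0∞)
      = ∑ j ∈ (univ.erase i).erase c, 2 := by
    refine Finset.sum_congr rfl fun j hj => ?_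
    have hjc := (mem_erase.mp hj).1
    have hji := (mem_erase.mp (Finset.mem_of_mem_erase hj)).1
    rw [star_edist_leaf hc hi hjc (Ne.symm hji)]
    exact_mod_cast rfl
  rw [h1, h2, Finset.sum_const, card_erase_of_mem hcmem, card_erase_of_mem (mem_univ i),
    card_univ, Fintype.card_fin]
  have : (2 * n - 3 : ℕ) = 1 + (n - 1 - 1) * 2 := by omega
  rw [this, nsmul_eq_mul]
  generalize (n - 1 - 1 : ℕ) = m
  push_cast
  ring

end Star

/-- For `α ≥ 2`, every rational profile forming a star is a strong equilibrium. -/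
theorem stmt10 {n : ℕ} (hn : 3 ≤ n) (α : ℝ) (hα : 2 ≤ α)
    (s : Profile n) (hv : Valid s) (hr : Rational s) (hstar : IsStar (NCGraph s)) :
    IsStrongEq α s := by
  classical
  obtain ⟨c, hc⟩ := hstar
  intro K s' hK hv' hfix
  by_contra hcon
  push_neg at hcon
  obtain ⟨i0, hi0⟩ := hK
  have hα0 : 0 ≤ α := by linarith
  -- finiteness of old costs
  have hdold : ∀ i, dCost s i ≠ ⊤ := by
    intro i
    by_cases hi : i = c
    · rw [hi, star_dcost_center hc]; exact natCast_ne_top _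
    · rw [star_dcost_leaf hc hn hi]; exact natCast_ne_top _
  have hcostold : ∀ i, cost α s i ≠ ⊤ := by
    intro i
    simp only [cost]
    exact ENNReal.add_ne_top.mpr ⟨ENNReal.mul_ne_top ofReal_ne_top (natCast_ne_top _), hdold i⟩
  have hcostnew : ∀ i ∈ K, cost α s' i ≠ ⊤ := fun i hi => (hcon i hi).trans_le le_top |>.ne
  -- connectivity of new graph
  have hd0 : dCost s' i0 ≠ ⊤ := by
    intro h
    apply hcostnew i0 hi0
    simp only [cost, h, add_top]
  have hreach : ∀ j, (NCGraph s').Reachable i0 j := by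
    intro j
    rw [← SimpleGraph.edist_ne_top_iff_reachable]
    intro h
    apply hd0
    have hle : ((NCGraph s').edist i0 j : ℝ≥0∞) ≤ dCost s' i0 :=
      Finset.single_le_sum (f := fun k => ((NCGraph s').edist i0 k : ℝ≥0∞))
        (fun k _ => zero_le) (mem_univ j)
    rw [h, ENat.toENNReal_top, top_le_iff] at hle
    exact hle
  have hpre : (NCGraph s').Preconnected := fun u v => (hreach u).symm.trans (hreach v)
  have hdnew : ∀ i, dCost s' i ≠ ⊤ := by
    intro i
    refine (ENNReal.sum_lt_top.mpr fun j _ => ?_).ne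
    have : (NCGraph s').edist i j ≠ ⊤ :=
      SimpleGraph.edist_ne_top_iff_reachable.mpr ((hreach i).symm.trans (hreach j))
    exact (enat_cast_ne_top this).lt_top
  -- real versions
  set f : Fin n → ℝ := fun i => (dCost s' i).toReal with hf
  set g : Fin n → ℝ := fun i => (dCost s i).toReal with hg
  have hcostR : ∀ (t : Profile n) i, dCost t i ≠ ⊤ →
      (cost α t i).toReal = α * (t i).card + (dCost t i).toReal := by
    intro t i hdt
    rw [cost, ENNReal.toReal_add (ENNReal.mul_ne_top ofReal_ne_top (natCast_ne_top _)) hdt,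
      ENNReal.toReal_mul, ENNReal.toReal_ofReal hα0, ENNReal.toReal_natCast]
  have hR1 : ∀ i ∈ K, α * (s' i).card + f i < α * (s i).card + g i := by
    intro i hi
    have := (ENNReal.toReal_lt_toReal (hcostnew i hi) (hcostold i)).mpr (hcon i hi)
    rwa [hcostR s' i (hdnew i), hcostR s i (hdold i)] at this
  have hR2 : ∀ i : Fin n, 2 * (n:ℝ) ≤ f i + ((NCGraph s').degree i : ℝ) + 2 := by
    intro i
    have h := dcost_deg s' i
    have hne : dCost s' i + (((NCGraph s').degree i : ℕ) : ℝ≥0∞) + 2 ≠ ⊤ := by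
      simp [ENNReal.add_ne_top, hdnew i, natCast_ne_top]
    have := (ENNReal.toReal_le_toReal (natCast_ne_top _) hne).mpr h
    rw [ENNReal.toReal_add, ENNReal.toReal_add, ENNReal.toReal_natCast, ENNReal.toReal_natCast,
      ENNReal.toReal_ofNat] at this
    · push_cast at this ⊢
      linarith
    · exact hdnew i
    · exact natCast_ne_top _
    · simp [ENNReal.add_ne_top, hdnew i, natCast_ne_top]
    · norm_num
  have hgc : g c = (n:ℝ) - 1 := by
    rw [hg]; simp only [star_dcost_center hc, ENNReal.toReal_natCast]
    push_cast [Nat.cast_sub (by omega : 1 ≤ n)]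
    ring
  have hgl : ∀ i : Fin n, i ≠ c → g i = 2*(n:ℝ) - 3 := by
    intro i hi
    rw [hg]; simp only [star_dcost_leaf hc hn hi, ENNReal.toReal_natCast]
    push_cast [Nat.cast_sub (by omega : 3 ≤ 2*n)]
    ring
  -- degree positivity off i0
  have hdegpos : ∀ v : Fin n, v ≠ i0 → 0 < (NCGraph s').degree v :=
    fun v hv => deg_pos_of_reachable hv ((hreach v).symm)
  by_cases hcK : c ∈ K
  · -- center in the coalition: global degree counting
    have hle : ∀ v ∈ (univ : Finset (Fin n)),
        α * ((s' v).card : ℝ) + (2*(n:ℝ) - 2) ≤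
          α * ((s v).card : ℝ) + g v + ((NCGraph s').degree v : ℝ) := by
      intro v _
      by_cases hvK : v ∈ K
      · have h1 := hR1 v hvK
        have h2 := hR2 v
        have : f v ≥ 2*(n:ℝ) - 2 - ((NCGraph s').degree v : ℝ) := by linarith
        linarith
      · have hvc : v ≠ c := fun h => hvK (h ▸ hcK)
        have hBv : (s' v).card = (s v).card := by rw [hfix v hvK]
        have hD1 : (1:ℝ) ≤ ((NCGraph s').degree v : ℝ) := by
          have : 0 < (NCGraph s').degree v := hdegpos v (fun h => hvK (h ▸ hi0))
          exact_mod_cast this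
        rw [hBv, hgl v hvc]
        linarith
    have hstrict : α * ((s' i0).card : ℝ) + (2*(n:ℝ) - 2) <
        α * ((s i0).card : ℝ) + g i0 + ((NCGraph s').degree i0 : ℝ) := by
      have h1 := hR1 i0 hi0
      have h2 := hR2 i0
      linarith
    have hsum := Finset.sum_lt_sum hle ⟨i0, mem_univ i0, hstrict⟩
    -- compute both sides
    rw [Finset.sum_add_distrib, Finset.sum_add_distrib, Finset.sum_add_distrib,
      ← Finset.mul_sum, ← Finset.mul_sum, Finset.sum_const, card_univ, Fintype.card_fin,
      nsmul_eq_mul] at hsum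
    have hsg : ∑ v, g v = ((n:ℝ) - 1) + ((n:ℝ) - 1) * (2*(n:ℝ) - 3) := by
      rw [← Finset.sum_erase_add univ g (mem_univ c), hgc]
      have : ∑ v ∈ univ.erase c, g v = ∑ v ∈ univ.erase c, (2*(n:ℝ) - 3) := by
        refine Finset.sum_congr rfl fun v hv' => hgl v (mem_erase.mp hv').1
      rw [this, Finset.sum_const, card_erase_of_mem (mem_univ c), card_univ, Fintype.card_fin,
        nsmul_eq_mul]
      push_cast [Nat.cast_sub (by omega : 1 ≤ n)]
      ring
    rw [hsg] at hsum
    -- cast sums to ℕ-sums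
    have hsB : ∑ v, ((s v).card : ℝ) = ((n - 1 : ℕ) : ℝ) := by
      rw [← Nat.cast_sum, sum_buy hc hv hr]
    have hsB' : ∑ v, ((s' v).card : ℝ) = ((∑ v, (s' v).card : ℕ) : ℝ) := by
      rw [← Nat.cast_sum]
    have hsD : ∑ v, ((NCGraph s').degree v : ℝ) = ((∑ v, (NCGraph s').degree v : ℕ) : ℝ) := by
      rw [← Nat.cast_sum]
    rw [hsB, hsB', hsD] at hsum
    -- ℕ facts
    set T : ℕ := ∑ v, (s' v).card with hT
    have hdegsum : ∑ v, (NCGraph s').degree v ≤ 2 * T := by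
      calc ∑ v, (NCGraph s').degree v ≤ ∑ v, ((s' v).card + inDeg s' v) :=
            Finset.sum_le_sum fun v _ => degree_le s' v
      _ = T + ∑ v, inDeg s' v := by rw [Finset.sum_add_distrib]
      _ = T + T := by rw [sum_inDeg_univ]
      _ = 2 * T := by ring
    have hTn : n - 1 ≤ T := by
      have h1 : Fintype.card (Fin n) ≤ #(NCGraph s').edgeFinset + 1 := card_le_edges hpre i0
      have h2 : ∑ v, (NCGraph s').degree v = 2 * #(NCGraph s').edgeFinset :=
        SimpleGraph.sum_degrees_eq_twice_card_edges _
      rw [Fintype.card_fin] at h1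
      omega
    -- final contradiction
    have hTR : ((n - 1 : ℕ) : ℝ) ≤ (T : ℝ) := by exact_mod_cast hTn
    have hDR : ((∑ v, (NCGraph s').degree v : ℕ) : ℝ) ≤ 2 * (T:ℝ) := by exact_mod_cast hdegsum
    have hn1 : ((n - 1 : ℕ) : ℝ) = (n:ℝ) - 1 := by
      push_cast [Nat.cast_sub (by omega : 1 ≤ n)]; ring
    rw [hn1] at hsum hTR
    nlinarith [mul_nonneg (by linarith : (0:ℝ) ≤ α - 2) (by linarith : (0:ℝ) ≤ (T:ℝ) - ((n:ℝ)-1))]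
  · -- center not in the coalition: in-degree counting
    have hKc : ∀ i ∈ K, i ≠ c := fun i hi he => hcK (he ▸ hi)
    -- per-member indegree bounds
    have hmem_bound : ∀ i ∈ K,
        (c ∉ s i → (s' i).card + 2 ≤ inDeg s' i) ∧ (c ∈ s i → (s' i).card ≤ inDeg s' i) := by
      intro i hi
      have hbc := leaf_card hc hv (hKc i hi)
      have h1 := hR1 i hi
      have h2 := hR2 i
      have hdd : α * ((s' i).card : ℝ) + 2*(n:ℝ) - 2 - ((NCGraph s').degree i : ℝ)
          < α * ((s i).card : ℝ) + g i := by linarith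
      rw [hgl i (hKc i hi)] at hdd
      have hdegle := degree_le s' i
      constructor
      · intro hcs
        have hB0 : (s i).card = 0 := by rw [hbc]; simp [hcs]
        rw [hB0] at hdd
        push_cast at hdd
        have hDgt : 2 * ((s' i).card : ℝ) + 1 < ((NCGraph s').degree i : ℝ) := by
          nlinarith [(Nat.cast_nonneg _ : (0:ℝ) ≤ ((s' i).card : ℝ)),
            mul_nonneg (by linarith : (0:ℝ) ≤ α - 2) (Nat.cast_nonneg _ : (0:ℝ) ≤ ((s' i).card : ℝ))]
        have : 2 * (s' i).card + 1 < (NCGraph s').degree i := by exact_mod_cast hDgt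
        omega
      · intro hcs
        have hB1 : (s i).card = 1 := by rw [hbc]; simp [hcs]
        rw [hB1] at hdd
        push_cast at hdd
        by_cases hB'0 : (s' i).card = 0
        · simp [hB'0]
        · have hB'1 : (1:ℝ) ≤ ((s' i).card : ℝ) := by
            have : 1 ≤ (s' i).card := Nat.one_le_iff_ne_zero.mpr hB'0
            exact_mod_cast this
          have hDgt : 2 * ((s' i).card : ℝ) - 1 < ((NCGraph s').degree i : ℝ) := by
            nlinarith [mul_nonneg (by linarith : (0:ℝ) ≤ α - 2)
              (by linarith : (0:ℝ) ≤ ((s' i).card : ℝ) - 1)]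
          have : 2 * (s' i).card - 1 < (NCGraph s').degree i := by
            have h2B : 1 ≤ 2 * (s' i).card := by omega
            have : (2 * (s' i).card : ℝ) - 1 < ((NCGraph s').degree i : ℝ) := by push_cast; linarith
            have := this
            exact_mod_cast (by push_cast [Nat.cast_sub h2B]; linarith : ((2 * (s' i).card - 1 : ℕ):ℝ) < ((NCGraph s').degree i : ℝ))
          omega
    -- supply accounting
    set m0 : ℕ := #(K.filter fun i => i ∈ s c) with hm0
    have hsupply : ∑ i ∈ K, inDeg s' i = m0 + ∑ j ∈ K, #(K.filter fun i => i ∈ s' j) := by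
      rw [sum_inDeg]
      rw [← Finset.sum_add_sum_compl K]
      have hcomp : ∑ j ∈ Kᶜ, #(K.filter fun i => i ∈ s' j) = m0 := by
        have hcmem : c ∈ Kᶜ := mem_compl.mpr hcK
        rw [← Finset.sum_erase_add Kᶜ _ hcmem]
        have hzero : ∑ j ∈ Kᶜ.erase c, #(K.filter fun i => i ∈ s' j) = 0 := by
          refine Finset.sum_eq_zero fun j hj => ?_
          have hjc := (mem_erase.mp hj).1
          have hjK := mem_compl.mp (Finset.mem_of_mem_erase hj)
          rw [Finset.card_eq_zero, Finset.filter_eq_empty_iff]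
          intro i hi hmem
          rw [hfix j hjK] at hmem
          have := leaf_sub hc hv hjc hmem
          exact hKc i hi (mem_singleton.mp this)
        rw [hzero, hfix c hcK, zero_add]
      rw [hcomp]; ring
    have hPle : ∑ j ∈ K, #(K.filter fun i => i ∈ s' j) ≤ ∑ j ∈ K, (s' j).card := by
      refine Finset.sum_le_sum fun j _ => ?_
      rw [Finset.filter_mem_eq_inter]
      exact card_le_card (Finset.inter_subset_right)
    have hlower : ∑ i ∈ K, ((s' i).card + 2 * (if i ∈ s c then 1 else 0)) ≤ ∑ i ∈ K, inDeg s' i := by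
      refine Finset.sum_le_sum fun i hi => ?_
      by_cases hcs : c ∈ s i
      · have : i ∉ s c := by
          intro h
          exact (mem_center hc hr (hKc i hi)).mp h hcs
        simp only [this, if_false, mul_zero, add_zero]
        exact ((hmem_bound i hi).2 hcs)
      · have : i ∈ s c := (mem_center hc hr (hKc i hi)).mpr hcs
        simp only [this, if_true, mul_one]
        have := (hmem_bound i hi).1 hcs
        omega
    have hlow2 : ∑ i ∈ K, (s' i).card + 2 * m0 ≤ ∑ i ∈ K, inDeg s' i := by
      rw [hm0]
      calc ∑ i ∈ K, (s' i).card + 2 * #(K.filter fun i => i ∈ s c)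
          = ∑ i ∈ K, ((s' i).card + 2 * (if i ∈ s c then 1 else 0)) := by
            rw [Finset.sum_add_distrib, card_filter, Finset.mul_sum]
      _ ≤ _ := hlower
    -- conclude m0 = 0 and pointwise saturation
    have hm00 : m0 = 0 := by omega
    have hPeq : ∑ j ∈ K, #(K.filter fun i => i ∈ s' j) = ∑ j ∈ K, (s' j).card := by omega
    have hsub : ∀ j ∈ K, s' j ⊆ K := by
      intro j hj
      have hpt := (Finset.sum_eq_sum_iff_of_le
        (fun j _ => by rw [Finset.filter_mem_eq_inter]; exact card_le_card Finset.inter_subset_right)).mp hPeq j hj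
      rw [Finset.filter_mem_eq_inter] at hpt
      have : K ∩ s' j = s' j :=
        Finset.eq_of_subset_of_card_le Finset.inter_subset_right (le_of_eq hpt.symm)
      rw [← this]
      exact Finset.inter_subset_left
    -- boundary edge contradiction
    obtain ⟨w⟩ := hreach c
    obtain ⟨u, x, hadj, huK, hxK⟩ := exists_boundary w hi0 hcK
    rcases (NCG_adj.mp hadj).2 with h | h
    · exact hxK (hsub u huK h)
    · rw [hfix x hxK] at h
      by_cases hxc : x = c
      · rw [hxc] at h
        have hmemf : u ∈ K.filter fun i => i ∈ s c := mem_filter.mpr ⟨huK, h⟩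
        have := Finset.card_pos.mpr ⟨u, hmemf⟩
        omega
      · have := leaf_sub hc hv hxc h
        exact hcK ((mem_singleton.mp this) ▸ huK)
end
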